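/- Let 𝒜 ⊆ ℝᵐ be a nonempty set of actions contained in the closed ball of radius a_max centered at the origin, let A, Â be n×n real matrices and B, B̂ be n×m real matrices, let W ∈ ℕ, let x₁, …, x_W ∈ ℝⁿ be states with ‖x_t‖₂ ≤ s_max for all t, and let y₂, …, y_{W+1} ∈ ℝⁿ be target points. Suppose for each t the online action â_t ∈ 𝒜 minimizes the model-predicted cost a ↦ ‖Â x_t + B̂ a − y_{t+1}‖₂ over 𝒜. Then for any comparator action sequence a⋆₁, …, a⋆_W in 𝒜, the cumulative true tracking cost satisfies ∑_{t=1}^{W} ‖A x_t + B â_t − y_{t+1}‖₂ ≤ ∑_{t=1}^{W} ‖A x_t + B a⋆_t − y_{t+1}‖₂ + 2W·(σ₁(A − Â)·s_max + σ₁(B − B̂)·a_max); i.e., the regret of planning with the approximate dynamics grows at most linearly in the horizon W and in the largest singular values of the system-matrix errors. -/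

import Mathlib

/-- The largest singular value of a real matrix, i.e. the ℓ²-operator norm of the
induced linear map between Euclidean spaces. -/
noncomputable def sigma1 {n m : ℕ} (M : Matrix (Fin n) (Fin m) ℝ) : ℝ :=
  ‖LinearMap.toContinuousLinearMap (Matrix.toEuclideanLin M)‖

lemma sigma1_bound {n m : ℕ} (M : Matrix (Fin n) (Fin m) ℝ)
    (v : EuclideanSpace ℝ (Fin m)) :
    ‖Matrix.toEuclideanLin M v‖ ≤ sigma1 M * ‖v‖ := by
  simpa [sigma1] using
    (LinearMap.toContinuousLinearMap (Matrix.toEuclideanLin M)).le_opNorm v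

theorem regret_linear_in_horizon {n m : ℕ}
    (𝒜 : Set (EuclideanSpace ℝ (Fin m))) (h𝒜 : 𝒜.Nonempty)
    (a_max : ℝ) (h𝒜bdd : 𝒜 ⊆ Metric.closedBall 0 a_max)
    (A Ahat : Matrix (Fin n) (Fin n) ℝ) (B Bhat : Matrix (Fin n) (Fin m) ℝ)
    (W : ℕ)
    (x : Fin W → EuclideanSpace ℝ (Fin n)) (s_max : ℝ)
    (hx : ∀ t, ‖x t‖ ≤ s_max)
    (y : Fin W → EuclideanSpace ℝ (Fin n))
    (ahat : Fin W → EuclideanSpace ℝ (Fin m)) (hahat : ∀ t, ahat t ∈ 𝒜)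
    (hmin : ∀ t, ∀ a ∈ 𝒜,
      ‖Matrix.toEuclideanLin Ahat (x t) + Matrix.toEuclideanLin Bhat (ahat t) - y t‖
        ≤ ‖Matrix.toEuclideanLin Ahat (x t) + Matrix.toEuclideanLin Bhat a - y t‖)
    (astar : Fin W → EuclideanSpace ℝ (Fin m)) (hastar : ∀ t, astar t ∈ 𝒜) :
    ∑ t : Fin W, ‖Matrix.toEuclideanLin A (x t) + Matrix.toEuclideanLin B (ahat t) - y t‖
      ≤ (∑ t : Fin W,
          ‖Matrix.toEuclideanLin A (x t) + Matrix.toEuclideanLin B (astar t) - y t‖)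
        + 2 * W * (sigma1 (A - Ahat) * s_max + sigma1 (B - Bhat) * a_max) := by
  set ε := sigma1 (A - Ahat) * s_max + sigma1 (B - Bhat) * a_max with hε
  have key : ∀ t : Fin W,
      ‖Matrix.toEuclideanLin A (x t) + Matrix.toEuclideanLin B (ahat t) - y t‖
        ≤ ‖Matrix.toEuclideanLin A (x t) + Matrix.toEuclideanLin B (astar t) - y t‖
          + 2 * ε := by
    intro t
    have herr : ∀ a ∈ 𝒜,
        ‖(Matrix.toEuclideanLin A (x t) + Matrix.toEuclideanLin B a - y t)
          - (Matrix.toEuclideanLin Ahat (x t) + Matrix.toEuclideanLin Bhat a - y t)‖ ≤ ε := by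
      intro a ha
      have hxe : ‖Matrix.toEuclideanLin (A - Ahat) (x t)‖ ≤ sigma1 (A - Ahat) * s_max := by
        refine (sigma1_bound _ _).trans ?_
        have : (0:ℝ) ≤ sigma1 (A - Ahat) := norm_nonneg _
        exact mul_le_mul_of_nonneg_left (hx t) this
      have hae : ‖Matrix.toEuclideanLin (B - Bhat) a‖ ≤ sigma1 (B - Bhat) * a_max := by
        refine (sigma1_bound _ _).trans ?_
        have hanorm : ‖a‖ ≤ a_max := by
          simpa using mem_closedBall_zero_iff.mp (h𝒜bdd ha)
        exact mul_le_mul_of_nonneg_left hanorm (norm_nonneg _)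
      have heq : (Matrix.toEuclideanLin A (x t) + Matrix.toEuclideanLin B a - y t)
          - (Matrix.toEuclideanLin Ahat (x t) + Matrix.toEuclideanLin Bhat a - y t)
          = Matrix.toEuclideanLin (A - Ahat) (x t) + Matrix.toEuclideanLin (B - Bhat) a := by
        simp [map_sub, LinearMap.sub_apply]
        abel
      calc ‖(Matrix.toEuclideanLin A (x t) + Matrix.toEuclideanLin B a - y t)
          - (Matrix.toEuclideanLin Ahat (x t) + Matrix.toEuclideanLin Bhat a - y t)‖
          = ‖Matrix.toEuclideanLin (A - Ahat) (x t) + Matrix.toEuclideanLin (B - Bhat) a‖ := by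
            rw [heq]
        _ ≤ ‖Matrix.toEuclideanLin (A - Ahat) (x t)‖ + ‖Matrix.toEuclideanLin (B - Bhat) a‖ :=
            norm_add_le _ _
        _ ≤ ε := by rw [hε]; exact add_le_add hxe hae
    have h1 : ‖Matrix.toEuclideanLin A (x t) + Matrix.toEuclideanLin B (ahat t) - y t‖
        ≤ ‖Matrix.toEuclideanLin Ahat (x t) + Matrix.toEuclideanLin Bhat (ahat t) - y t‖ + ε := by
      have := herr (ahat t) (hahat t)
      have := norm_sub_norm_le
        (Matrix.toEuclideanLin A (x t) + Matrix.toEuclideanLin B (ahat t) - y t)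
        (Matrix.toEuclideanLin Ahat (x t) + Matrix.toEuclideanLin Bhat (ahat t) - y t)
      linarith [herr (ahat t) (hahat t)]
    have h2 := hmin t (astar t) (hastar t)
    have h3 : ‖Matrix.toEuclideanLin Ahat (x t) + Matrix.toEuclideanLin Bhat (astar t) - y t‖
        ≤ ‖Matrix.toEuclideanLin A (x t) + Matrix.toEuclideanLin B (astar t) - y t‖ + ε := by
      have := norm_sub_norm_le
        (Matrix.toEuclideanLin Ahat (x t) + Matrix.toEuclideanLin Bhat (astar t) - y t)
        (Matrix.toEuclideanLin A (x t) + Matrix.toEuclideanLin B (astar t) - y t)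
      have h := herr (astar t) (hastar t)
      rw [← norm_neg] at h
      simp only [neg_sub] at h
      linarith
    linarith
  calc ∑ t : Fin W, ‖Matrix.toEuclideanLin A (x t) + Matrix.toEuclideanLin B (ahat t) - y t‖
      ≤ ∑ t : Fin W,
        (‖Matrix.toEuclideanLin A (x t) + Matrix.toEuclideanLin B (astar t) - y t‖ + 2 * ε) :=
        Finset.sum_le_sum fun t _ => key t
    _ = (∑ t : Fin W,
          ‖Matrix.toEuclideanLin A (x t) + Matrix.toEuclideanLin B (astar t) - y t‖)
        + 2 * W * ε := by
        rw [Finset.sum_add_distrib]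
        simp [Finset.sum_const]
        ring
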